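/- Consider an interconnected system with control inputs, true dynamics f_i and surrogate dynamics f̃_i (both Lipschitz with constants L_{f_i}, L_{f̃_i}), closed by controllers π_i that are Lipschitz with constants L_{π_i}, and Lyapunov functions V_i Lipschitz with constants L_{V_i}. For each i, let 𝒟_i be a rectangular grid with per-dimension step sizes Δ in the bounded closed-loop operating region (so every admissible point is within Euclidean distance ½|Δ|₂ of 𝒟_i), let ε̂_i be the maximum over the grid of the norm of the closed-loop model mismatch, and set ε_i = ε̂_i + ½(L_{f_i} + L_{f̃_i})(1 + L_{π_i})|Δ|₂. Suppose there exist ε ∈ (0,1), ψ ≥ 0, class-𝒦_∞ functions α1, α2 with α1(|x|₂) ≤ V_i(x) ≤ α2(|x|₂), nonnegative gains γ_{i,j} with max_{i∈𝒩} Σ_{j∈ℰ_i∪{i}} γ_{i,j} ≤ 1−ε, and margins δ_i ≥ L_{V_i} ε_i > 0 such that V_i(f̃_i(x_i, {x_j}_{j∈ℰ_i}, π_i(x_i, {x_j}_{j∈ℰ_i}), d_i)) ≤ Σ_{j∈ℰ_i∪{i}} γ_{i,j} V_j(x_j) + ψ|d_i|₂ − δ_i for all admissible states and disturbances. Then the true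 closed-loop system satisfies the decremental inequality V_i(f_i(x_i, {x_j}_{j∈ℰ_i}, π_i(x_i, {x_j}_{j∈ℰ_i}), d_i)) ≤ Σ_{j∈ℰ_i∪{i}} γ_{i,j} V_j(x_j) + ψ|d_i|₂, and hence the true closed-loop interconnected system is scalably input-to-state stable. -/

import Mathlib

open scoped NNReal
open Filter

noncomputable section

/-- `ℝ^m` with the Euclidean norm. -/
abbrev Evec (m : ℕ) : Type := EuclideanSpace ℝ (Fin m)

/-- A class-𝒦 function: continuous, strictly increasing, vanishing at `0`. -/
def IsClassK (α : ℝ≥0 → ℝ≥0) : Prop :=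
  Continuous α ∧ StrictMono α ∧ α 0 = 0

/-- A class-𝒦∞ function: class 𝒦 and unbounded. -/
def IsClassKInfty (α : ℝ≥0 → ℝ≥0) : Prop :=
  IsClassK α ∧ Tendsto α atTop atTop

/-- A class-𝒦ℒ function. -/
def IsClassKL (β : ℝ≥0 → ℕ → ℝ≥0) : Prop :=
  (∀ k : ℕ, IsClassK fun s => β s k) ∧
    ∀ s : ℝ≥0, Tendsto (fun k => β s k) atTop (nhds 0)

/-- The local observation of agent `i`: the tuple `(x_i, {x_j}_{j ∈ nbr i})`, with
the Euclidean norm of the concatenated vector. -/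
def Obs {ι : Type} (n : ι → ℕ) (nbr : ι → Finset ι) (i : ι) : Type :=
  WithLp 2 (Evec (n i) × PiLp 2 fun j : {j // j ∈ nbr i} => Evec (n j.1))

noncomputable instance {ι : Type} (n : ι → ℕ) (nbr : ι → Finset ι) (i : ι) :
    NormedAddCommGroup (Obs n nbr i) := by
  unfold Obs; infer_instance

/-- The open-loop input space of agent `i`: `(x_i, {x_j}_{j ∈ nbr i}, u_i, d_i)`,
with the Euclidean norm of the concatenated vector. -/
def FIn {ι : Type} (n q p : ι → ℕ) (nbr : ι → Finset ι) (i : ι) : Type :=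
  WithLp 2 (Obs n nbr i × WithLp 2 (Evec (q i) × Evec (p i)))

noncomputable instance {ι : Type} (n q p : ι → ℕ) (nbr : ι → Finset ι) (i : ι) :
    NormedAddCommGroup (FIn n q p nbr i) := by
  unfold FIn; infer_instance

/-- The closed-loop input space of agent `i`: `z = (x_i, {x_j}_{j ∈ nbr i}, d_i)`,
with the Euclidean norm of the concatenated vector. -/
def Zcl {ι : Type} (n p : ι → ℕ) (nbr : ι → Finset ι) (i : ι) : Type :=
  WithLp 2 (Obs n nbr i × Evec (p i))

noncomputable instance {ι : Type} (n p : ι → ℕ) (nbr : ι → Finset ι) (i : ι) :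
    NormedAddCommGroup (Zcl n p nbr i) := by
  unfold Zcl; infer_instance

/-- The local observation of agent `i` extracted from a global state profile. -/
def obsOf {ι : Type} (n : ι → ℕ) (nbr : ι → Finset ι) (i : ι)
    (x : ∀ j : ι, Evec (n j)) : Obs n nbr i :=
  (WithLp.equiv 2 _).symm
    (x i, (WithLp.equiv 2 _).symm (fun j : {j // j ∈ nbr i} => x j.1))

/-- Assembling the closed-loop input `z = (x_i, {x_j}_{j ∈ nbr i}, d_i)`. -/
def packZ {ι : Type} (n p : ι → ℕ) (nbr : ι → Finset ι) (i : ι)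
    (x : ∀ j : ι, Evec (n j)) (d : Evec (p i)) : Zcl n p nbr i :=
  (WithLp.equiv 2 _).symm (obsOf n nbr i x, d)

/-- The closed-loop map of agent `i`: `z = (o, d) ↦ fdyn i (o, π i o, d)`. -/
def clMap {ι : Type} (n q p : ι → ℕ) (nbr : ι → Finset ι)
    (fdyn : ∀ i : ι, FIn n q p nbr i → Evec (n i))
    (π : ∀ i : ι, Obs n nbr i → Evec (q i)) (i : ι)
    (z : Zcl n p nbr i) : Evec (n i) :=
  let oz := WithLp.equiv 2 _ z
  fdyn i ((WithLp.equiv 2 _).symm (oz.1, (WithLp.equiv 2 _).symm (π i oz.1, oz.2)))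

/-- Inverse of a class-𝒦∞ function. -/
lemma classKInfty_inv (α : ℝ≥0 → ℝ≥0) (h : IsClassKInfty α) :
    ∃ g : ℝ≥0 → ℝ≥0, Continuous g ∧ StrictMono g ∧ g 0 = 0 ∧ ∀ t, g (α t) = t := by
  obtain ⟨⟨hc, hm, h0⟩, htop⟩ := h
  have hsurj : Function.Surjective α := by
    intro y
    obtain ⟨b, hb⟩ := (htop.eventually (eventually_ge_atTop y)).exists
    have : y ∈ Set.Icc (α 0) (α b) := ⟨by rw [h0]; exact zero_le, hb⟩
    obtain ⟨t, _, ht⟩ := intermediate_value_Icc (zero_le : (0:ℝ≥0) ≤ b) hc.continuousOn this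
    exact ⟨t, ht⟩
  let e := StrictMono.orderIsoOfSurjective α hm hsurj
  refine ⟨e.symm, e.symm.continuous, e.symm.strictMono, ?_, fun t => ?_⟩
  · have h00 : e 0 = 0 := h0
    exact e.symm_apply_eq.mpr h00.symm
  · exact e.symm_apply_apply t

/-- The closed-loop map is Lipschitz with constant `Lf * (1 + Lπ)`. -/
lemma clMap_lipschitz {ι : Type} (n q p : ι → ℕ) (nbr : ι → Finset ι)
    (fdyn : ∀ i : ι, FIn n q p nbr i → Evec (n i))
    (π : ∀ i : ι, Obs n nbr i → Evec (q i)) (i : ι)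
    (Lf Lπ : ℝ≥0) (hLf : LipschitzWith Lf (fdyn i)) (hLπ : LipschitzWith (Lπ) (π i)) :
    LipschitzWith (Lf * (1 + Lπ)) (clMap n q p nbr fdyn π i) := by
  have hg : LipschitzWith (1 + Lπ) (fun z : Zcl n p nbr i =>
      ((WithLp.equiv 2 _).symm ((WithLp.equiv 2 _ z).1,
        (WithLp.equiv 2 _).symm (π i (WithLp.equiv 2 _ z).1, (WithLp.equiv 2 _ z).2))
        : FIn n q p nbr i)) := by
    apply LipschitzWith.of_dist_le_mul
    intro z z'
    set a := dist (z : WithLp 2 _).fst (z' : WithLp 2 _).fst with ha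
    set c := dist (z : WithLp 2 _).snd (z' : WithLp 2 _).snd with hc
    set b := dist (π i (z : WithLp 2 _).fst) (π i (z' : WithLp 2 _).fst) with hb
    have hbound : b ≤ Lπ * a := hLπ.dist_le_mul _ _
    have ha0 : 0 ≤ a := dist_nonneg
    have hb0 : 0 ≤ b := dist_nonneg
    have hc0 : 0 ≤ c := dist_nonneg
    have hdz : dist z z' = Real.sqrt (a ^ 2 + c ^ 2) :=
      WithLp.prod_dist_eq_of_L2 z z'
    have hinner : dist ((WithLp.equiv 2 (Evec (q i) × Evec (p i))).symm
          (π i (z : WithLp 2 _).fst, (z : WithLp 2 _).snd))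
        ((WithLp.equiv 2 (Evec (q i) × Evec (p i))).symm
          (π i (z' : WithLp 2 _).fst, (z' : WithLp 2 _).snd)) =
        Real.sqrt (b ^ 2 + c ^ 2) :=
      WithLp.prod_dist_eq_of_L2 _ _
    have hdist : dist ((fun z : Zcl n p nbr i =>
        ((WithLp.equiv 2 _).symm ((WithLp.equiv 2 _ z).1,
          (WithLp.equiv 2 _).symm (π i (WithLp.equiv 2 _ z).1, (WithLp.equiv 2 _ z).2))
          : FIn n q p nbr i)) z)
        ((fun z : Zcl n p nbr i =>
        ((WithLp.equiv 2 _).symm ((WithLp.equiv 2 _ z).1,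
          (WithLp.equiv 2 _).symm (π i (WithLp.equiv 2 _ z).1, (WithLp.equiv 2 _ z).2))
          : FIn n q p nbr i)) z') =
        Real.sqrt (a ^ 2 + Real.sqrt (b ^ 2 + c ^ 2) ^ 2) := by
      rw [WithLp.prod_dist_eq_of_L2]
      congr 2
      exact congrArg (· ^ 2) hinner
    rw [hdist, hdz]
    rw [Real.sq_sqrt (by positivity)]
    have key : a ^ 2 + (b ^ 2 + c ^ 2) ≤ ((1 + Lπ : ℝ≥0) * Real.sqrt (a ^ 2 + c ^ 2)) ^ 2 := by
      have h1 : Real.sqrt (a ^ 2 + c ^ 2) ^ 2 = a ^ 2 + c ^ 2 := Real.sq_sqrt (by positivity)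
      have hLπ0 : (0:ℝ) ≤ (Lπ : ℝ) := (Lπ : ℝ≥0).coe_nonneg
      rw [mul_pow, h1]
      push_cast
      nlinarith [sq_nonneg ((Lπ:ℝ) * c), sq_nonneg a, sq_nonneg c]
    calc Real.sqrt (a ^ 2 + (b ^ 2 + c ^ 2))
        ≤ Real.sqrt (((1 + Lπ : ℝ≥0) * Real.sqrt (a ^ 2 + c ^ 2)) ^ 2) :=
          Real.sqrt_le_sqrt key
      _ = (1 + Lπ : ℝ≥0) * Real.sqrt (a ^ 2 + c ^ 2) := Real.sqrt_sq (by positivity)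
  exact hLf.comp hg

/-- **Robust closed-loop sISS verification.** Suppose the true dynamics `f i` and
surrogate dynamics `ftil i` are Lipschitz with constants `Lf i`, `Lftil i`, the
controllers `π i` with constants `Lπ i`, and the Lyapunov functions `V i` with
constants `LV i`. Let `𝒟 i` be a grid in the bounded closed-loop operating region
`𝒵 i` with covering radius `Δ/2`, let `εhat i` bound the closed-loop model mismatch
on the grid, and set `ε_i = εhat i + (Lf i + Lftil i)(1 + Lπ i) Δ / 2`. If `V`
satisfies class-𝒦∞ sandwich bounds and, with margins `δ i ≥ LV i * ε_i > 0`, the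
strengthened decremental condition holds for the surrogate closed loop on `𝒵 i`,
then the decremental condition holds for the true closed loop on `𝒵 i`, and hence
the true closed-loop interconnected system is scalably input-to-state stable. -/
theorem robust_closed_loop_sISS_verification
    {ι : Type} [Fintype ι] [Nonempty ι] [DecidableEq ι]
    (n q p : ι → ℕ) (nbr : ι → Finset ι)
    (f ftil : ∀ i : ι, FIn n q p nbr i → Evec (n i))
    (π : ∀ i : ι, Obs n nbr i → Evec (q i))
    (Lf Lftil Lπ LV : ι → ℝ≥0)
    (hLf : ∀ i : ι, LipschitzWith (Lf i) (f i))
    (hLftil : ∀ i : ι, LipschitzWith (Lftil i) (ftil i))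
    (hLπ : ∀ i : ι, LipschitzWith (Lπ i) (π i))
    (V : ∀ i : ι, Evec (n i) → ℝ≥0)
    (hLV : ∀ i : ι, LipschitzWith (LV i) (V i))
    (𝒵 𝒟 : ∀ i : ι, Set (Zcl n p nbr i))
    (hDZ : ∀ i : ι, 𝒟 i ⊆ 𝒵 i)
    (Δ : ℝ≥0)
    (hcover : ∀ i : ι, ∀ z ∈ 𝒵 i, ∃ z' ∈ 𝒟 i, dist z z' ≤ (Δ : ℝ) / 2)
    (εhat : ι → ℝ≥0)
    (hgrid : ∀ i : ι, ∀ z ∈ 𝒟 i,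
      dist (clMap n q p nbr f π i z) (clMap n q p nbr ftil π i z) ≤ (εhat i : ℝ))
    (δ : ι → ℝ≥0)
    (hδpos : ∀ i : ι, 0 < LV i * (εhat i + (Lf i + Lftil i) * (1 + Lπ i) * Δ / 2))
    (hδ : ∀ i : ι, LV i * (εhat i + (Lf i + Lftil i) * (1 + Lπ i) * Δ / 2) ≤ δ i)
    (ε : ℝ≥0) (hε0 : 0 < ε) (hε1 : ε < 1) (ψ : ℝ≥0)
    (α₁ α₂ : ℝ≥0 → ℝ≥0) (hα₁ : IsClassKInfty α₁) (hα₂ : IsClassKInfty α₂)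
    (γ : ι → ι → ℝ≥0)
    (hsg : ∀ i : ι, ∑ j ∈ insert i (nbr i), γ i j ≤ 1 - ε)
    (hsandwich : ∀ (i : ι) (x : Evec (n i)), α₁ ‖x‖₊ ≤ V i x ∧ V i x ≤ α₂ ‖x‖₊)
    -- strengthened decremental condition for the surrogate closed loop on `𝒵 i`
    (hdectil : ∀ (i : ι) (x : ∀ j : ι, Evec (n j)) (d : Evec (p i)),
      packZ n p nbr i x d ∈ 𝒵 i →
      V i (clMap n q p nbr ftil π i (packZ n p nbr i x d)) + δ i ≤
        ∑ j ∈ insert i (nbr i), γ i j * V j (x j) + ψ * ‖d‖₊) :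
    -- the decremental condition holds for the true closed loop on `𝒵 i` …
    (∀ (i : ι) (x : ∀ j : ι, Evec (n j)) (d : Evec (p i)),
      packZ n p nbr i x d ∈ 𝒵 i →
      V i (clMap n q p nbr f π i (packZ n p nbr i x d)) ≤
        ∑ j ∈ insert i (nbr i), γ i j * V j (x j) + ψ * ‖d‖₊) ∧
    -- … and hence the true closed-loop system is scalably input-to-state stable
    (∃ β : ℝ≥0 → ℕ → ℝ≥0, ∃ μ : ℝ≥0 → ℝ≥0, IsClassKL β ∧ IsClassK μ ∧
      ∀ (x : ℕ → ∀ j : ι, Evec (n j)) (d : ℕ → ∀ i : ι, Evec (p i)),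
        (∀ (k : ℕ) (i : ι), packZ n p nbr i (x k) (d k i) ∈ 𝒵 i) →
        (∀ (k : ℕ) (i : ι),
          x (k + 1) i = clMap n q p nbr f π i (packZ n p nbr i (x k) (d k i))) →
        ∀ C : ℝ≥0, (∀ (k : ℕ) (i : ι), ‖d k i‖₊ ≤ C) →
        ∀ (k : ℕ) (i : ι),
          ‖x k i‖₊ ≤ β (Finset.univ.sup fun j => ‖x 0 j‖₊) k + μ C) := by
  
  -- Part 1: decremental condition for the true closed loop
  have part1 : ∀ (i : ι) (x : ∀ j : ι, Evec (n j)) (d : Evec (p i)),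
      packZ n p nbr i x d ∈ 𝒵 i →
      V i (clMap n q p nbr f π i (packZ n p nbr i x d)) ≤
        ∑ j ∈ insert i (nbr i), γ i j * V j (x j) + ψ * ‖d‖₊ := by
    intro i x d hz
    set z := packZ n p nbr i x d with hzdef
    obtain ⟨z', hz'D, hzz'⟩ := hcover i z hz
    have hclf := clMap_lipschitz n q p nbr f π i (Lf i) (Lπ i) (hLf i) (hLπ i)
    have hclftil := clMap_lipschitz n q p nbr ftil π i (Lftil i) (Lπ i) (hLftil i) (hLπ i)
    -- distance bound between true and surrogate closed loops at z
    have hdistR : dist (clMap n q p nbr f π i z) (clMap n q p nbr ftil π i z) ≤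
        ((εhat i + (Lf i + Lftil i) * (1 + Lπ i) * Δ / 2 : ℝ≥0) : ℝ) := by
      have h1 : dist (clMap n q p nbr f π i z) (clMap n q p nbr f π i z') ≤
          (Lf i * (1 + Lπ i) : ℝ≥0) * dist z z' := hclf.dist_le_mul z z'
      have h2 := hgrid i z' hz'D
      have h3 : dist (clMap n q p nbr ftil π i z') (clMap n q p nbr ftil π i z) ≤
          (Lftil i * (1 + Lπ i) : ℝ≥0) * dist z' z := hclftil.dist_le_mul z' z
      have htri := dist_triangle4 (clMap n q p nbr f π i z) (clMap n q p nbr f π i z')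
        (clMap n q p nbr ftil π i z') (clMap n q p nbr ftil π i z)
      have hz'z : dist z' z = dist z z' := dist_comm _ _
      have hnonneg1 : (0:ℝ) ≤ (Lf i * (1 + Lπ i) : ℝ≥0) := NNReal.coe_nonneg _
      have hnonneg2 : (0:ℝ) ≤ (Lftil i * (1 + Lπ i) : ℝ≥0) := NNReal.coe_nonneg _
      have hd0 : (0:ℝ) ≤ dist z z' := dist_nonneg
      have hL1 : (0:ℝ) ≤ (Lf i : ℝ) * (1 + (Lπ i : ℝ)) := by positivity
      have hL2 : (0:ℝ) ≤ (Lftil i : ℝ) * (1 + (Lπ i : ℝ)) := by positivity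
      have e1 : (Lf i : ℝ) * (1 + (Lπ i : ℝ)) * dist z z' ≤
          (Lf i : ℝ) * (1 + (Lπ i : ℝ)) * ((Δ : ℝ) / 2) :=
        mul_le_mul_of_nonneg_left hzz' hL1
      have e3 : (Lftil i : ℝ) * (1 + (Lπ i : ℝ)) * dist z z' ≤
          (Lftil i : ℝ) * (1 + (Lπ i : ℝ)) * ((Δ : ℝ) / 2) :=
        mul_le_mul_of_nonneg_left hzz' hL2
      push_cast
      push_cast at h1 h3
      rw [hz'z] at h3
      nlinarith [h1, h2, h3, htri, e1, e3]
    have hdistN : nndist (clMap n q p nbr f π i z) (clMap n q p nbr ftil π i z) ≤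
        εhat i + (Lf i + Lftil i) * (1 + Lπ i) * Δ / 2 := by
      rw [← NNReal.coe_le_coe, coe_nndist]
      exact hdistR
    have hVstep : V i (clMap n q p nbr f π i z) ≤
        V i (clMap n q p nbr ftil π i z) + δ i := by
      have hVd : nndist (V i (clMap n q p nbr f π i z)) (V i (clMap n q p nbr ftil π i z)) ≤
          LV i * nndist (clMap n q p nbr f π i z) (clMap n q p nbr ftil π i z) :=
        (hLV i).nndist_le _ _
      have h1 : V i (clMap n q p nbr f π i z) ≤
          V i (clMap n q p nbr ftil π i z) +
            nndist (V i (clMap n q p nbr f π i z)) (V i (clMap n q p nbr ftil π i z)) := by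
        rw [NNReal.nndist_eq]
        calc V i (clMap n q p nbr f π i z)
            ≤ V i (clMap n q p nbr ftil π i z) +
              (V i (clMap n q p nbr f π i z) - V i (clMap n q p nbr ftil π i z)) :=
              le_add_tsub
          _ ≤ _ := by gcongr; exact le_max_left _ _
      calc V i (clMap n q p nbr f π i z)
          ≤ V i (clMap n q p nbr ftil π i z) +
              nndist (V i (clMap n q p nbr f π i z)) (V i (clMap n q p nbr ftil π i z)) := h1
        _ ≤ V i (clMap n q p nbr ftil π i z) +
              LV i * (εhat i + (Lf i + Lftil i) * (1 + Lπ i) * Δ / 2) := by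
            gcongr
            exact le_trans hVd (by gcongr)
        _ ≤ V i (clMap n q p nbr ftil π i z) + δ i := by gcongr; exact hδ i
    calc V i (clMap n q p nbr f π i z)
        ≤ V i (clMap n q p nbr ftil π i z) + δ i := hVstep
      _ ≤ ∑ j ∈ insert i (nbr i), γ i j * V j (x j) + ψ * ‖d‖₊ := hdectil i x d hz
  refine ⟨part1, ?_⟩
  -- Part 2: sISS
  obtain ⟨g, hgc, hgm, hg0, hginv⟩ := classKInfty_inv α₁ hα₁
  obtain ⟨⟨hα₂c, hα₂m, hα₂0⟩, _⟩ := hα₂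
  set r : ℝ≥0 := 1 - ε with hrdef
  have hr1 : r < 1 := tsub_lt_self one_pos hε0
  have hr0 : 0 < r := tsub_pos_of_lt hε1
  have hre : r + ε = 1 := tsub_add_cancel_of_le hε1.le
  refine ⟨fun s k => g (2 * r ^ k * α₂ s), fun c => g (2 * (ψ + 1) / ε * c), ⟨?_, ?_⟩, ?_, ?_⟩
  · -- class K in s for each k
    intro k
    have hck : (0:ℝ≥0) < 2 * r ^ k := by positivity
    refine ⟨hgc.comp (Continuous.mul continuous_const hα₂c), ?_, ?_⟩
    · intro s t hst
      exact hgm (mul_lt_mul_of_pos_left (hα₂m hst) hck)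
    · simp [hα₂0, hg0]
  · -- tendsto 0 in k
    intro s
    have hpow : Tendsto (fun k : ℕ => r ^ k) atTop (nhds 0) :=
      NNReal.tendsto_pow_atTop_nhds_zero_of_lt_one hr1
    have : Tendsto (fun k : ℕ => 2 * r ^ k * α₂ s) atTop (nhds 0) := by
      have := (hpow.const_mul (2 : ℝ≥0)).mul_const (α₂ s)
      simpa using this
    have := (hgc.tendsto 0).comp this
    simpa [hg0, Function.comp_def] using this
  · -- μ class K
    have hcpos : (0:ℝ≥0) < 2 * (ψ + 1) / ε := by positivity
    refine ⟨hgc.comp (continuous_const.mul continuous_id), ?_, ?_⟩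
    · intro s t hst
      exact hgm (mul_lt_mul_of_pos_left hst hcpos)
    · simp [hg0]
  · -- trajectory bound
    intro x d hzmem hstep C hC
    set W : ℕ → ℝ≥0 := fun k => Finset.univ.sup fun j => V j (x k j) with hWdef
    set M : ℝ≥0 := Finset.univ.sup fun j => ‖x 0 j‖₊ with hMdef
    have hstepW : ∀ k, W (k + 1) ≤ r * W k + ψ * C := by
      intro k
      apply Finset.sup_le
      intro i _
      rw [hstep k i]
      calc V i (clMap n q p nbr f π i (packZ n p nbr i (x k) (d k i)))
          ≤ ∑ j ∈ insert i (nbr i), γ i j * V j (x k j) + ψ * ‖d k i‖₊ :=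
            part1 i (x k) (d k i) (hzmem k i)
        _ ≤ ∑ j ∈ insert i (nbr i), γ i j * W k + ψ * C := by
            gcongr with j hj
            · exact Finset.le_sup (f := fun j => V j (x k j)) (Finset.mem_univ j)
            · exact hC k i
        _ = (∑ j ∈ insert i (nbr i), γ i j) * W k + ψ * C := by
            rw [Finset.sum_mul]
        _ ≤ r * W k + ψ * C := by gcongr; exact hsg i
    have hWk : ∀ k, W k ≤ r ^ k * W 0 + ψ * C / ε := by
      intro k
      induction k with
      | zero => simp
      | succ k ih =>
        calc W (k + 1) ≤ r * W k + ψ * C := hstepW k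
          _ ≤ r * (r ^ k * W 0 + ψ * C / ε) + ψ * C := by gcongr
          _ = r ^ (k + 1) * W 0 + (r * (ψ * C / ε) + ε * (ψ * C / ε)) := by
              rw [mul_div_cancel₀ _ hε0.ne']
              ring
          _ = r ^ (k + 1) * W 0 + ψ * C / ε := by
              rw [← add_mul, hre, one_mul]
    intro k i
    have hW0 : W 0 ≤ α₂ M := by
      apply Finset.sup_le
      intro j _
      exact le_trans (hsandwich j (x 0 j)).2
        (hα₂m.monotone (Finset.le_sup (f := fun j => ‖x 0 j‖₊) (Finset.mem_univ j)))
    have hVx : α₁ ‖x k i‖₊ ≤ r ^ k * α₂ M + ψ * C / ε := by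
      calc α₁ ‖x k i‖₊ ≤ V i (x k i) := (hsandwich i (x k i)).1
        _ ≤ W k := Finset.le_sup (f := fun j => V j (x k j)) (Finset.mem_univ i)
        _ ≤ r ^ k * W 0 + ψ * C / ε := hWk k
        _ ≤ r ^ k * α₂ M + ψ * C / ε := by gcongr
    have hsplit : r ^ k * α₂ M + ψ * C / ε ≤
        max (2 * r ^ k * α₂ M) (2 * (ψ * C / ε)) := by
      rcases le_total (r ^ k * α₂ M) (ψ * C / ε) with h | h
      · calc r ^ k * α₂ M + ψ * C / ε ≤ ψ * C / ε + ψ * C / ε := by gcongr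
          _ = 2 * (ψ * C / ε) := by ring
          _ ≤ _ := le_max_right _ _
      · calc r ^ k * α₂ M + ψ * C / ε ≤ r ^ k * α₂ M + r ^ k * α₂ M := by gcongr
          _ = 2 * r ^ k * α₂ M := by ring
          _ ≤ _ := le_max_left _ _
    calc ‖x k i‖₊ = g (α₁ ‖x k i‖₊) := (hginv _).symm
      _ ≤ g (max (2 * r ^ k * α₂ M) (2 * (ψ * C / ε))) :=
          hgm.monotone (le_trans hVx hsplit)
      _ = max (g (2 * r ^ k * α₂ M)) (g (2 * (ψ * C / ε))) :=
          hgm.monotone.map_max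
      _ ≤ g (2 * r ^ k * α₂ M) + g (2 * (ψ + 1) / ε * C) := by
          apply max_le
          · exact le_self_add
          · refine le_add_left (hgm.monotone ?_)
            rw [div_mul_eq_mul_div, ← mul_div_assoc, mul_assoc]
            gcongr
            exact le_self_add
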